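/- Let X^{(l)} be defined by X^{(l+1)} = σ(A^{(l)} X^{(l)} W^{(l)}) where σ is 1-Lipschitz, u is a unit vector with A^{(l)} u = λ_l u for every l, u is an eigenvector of σ, and P = u uᵀ. If ∏_{l=0}^{L-1} ‖(I−P)A^{(l)}‖₂ ‖W^{(l)}‖₂ → 0 as L → ∞, then ‖X^{(L)} − P X^{(L)}‖_F² → 0 as L → ∞. -/

import Mathlib

open scoped BigOperators

noncomputable def vecNorm {n : ℕ} (v : Fin n → ℝ) : ℝ := Real.sqrt (∑ i, v i ^ 2)

noncomputable def frobNorm {N d : ℕ} (X : Matrix (Fin N) (Fin d) ℝ) : ℝ :=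
  Real.sqrt (∑ i, ∑ j, X i j ^ 2)

noncomputable def specNorm {N d : ℕ} (X : Matrix (Fin N) (Fin d) ℝ) : ℝ :=
  sSup {c : ℝ | ∃ v : Fin d → ℝ, vecNorm v ≤ 1 ∧ c = vecNorm (X.mulVec v)}

noncomputable def numRank {N d : ℕ} (X : Matrix (Fin N) (Fin d) ℝ) : ℝ :=
  frobNorm X ^ 2 / specNorm X ^ 2

def frobInner {N d : ℕ} (A B : Matrix (Fin N) (Fin d) ℝ) : ℝ := ∑ i, ∑ j, A i j * B i j

/-- Hilbert projective distance on the open positive cone. -/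
noncomputable def dH {n : ℕ} (x y : Fin n → ℝ) : ℝ :=
  Real.log ((⨆ i, x i / y i) / (⨅ i, x i / y i))

/-- Apply a map `σ : ℝ^N → ℝ^N` to each column of a matrix. -/
def colApply {N d : ℕ} (σ : (Fin N → ℝ) → (Fin N → ℝ)) (M : Matrix (Fin N) (Fin d) ℝ) :
    Matrix (Fin N) (Fin d) ℝ := Matrix.of fun i j => σ (fun k => M k j) i

noncomputable def toE {n : ℕ} (v : Fin n → ℝ) : EuclideanSpace ℝ (Fin n) := (WithLp.equiv 2 _).symm v
lemma vecNorm_eq {n : ℕ} (v : Fin n → ℝ) : vecNorm v = ‖toE v‖ := by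
  rw [EuclideanSpace.norm_eq]; simp [vecNorm, toE, Real.norm_eq_abs, sq_abs]
lemma toE_sub {n : ℕ} (x y : Fin n → ℝ) : toE (x - y) = toE x - toE y := rfl
lemma toE_add {n : ℕ} (x y : Fin n → ℝ) : toE (x + y) = toE x + toE y := rfl
lemma toE_smul {n : ℕ} (c : ℝ) (x : Fin n → ℝ) : toE (c • x) = c • toE x := rfl

lemma vecNorm_nonneg {n : ℕ} (v : Fin n → ℝ) : 0 ≤ vecNorm v := Real.sqrt_nonneg _
lemma vecNorm_sq {n : ℕ} (v : Fin n → ℝ) : vecNorm v ^ 2 = ∑ i, v i ^ 2 :=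
  Real.sq_sqrt (Finset.sum_nonneg fun i _ => sq_nonneg _)
lemma vecNorm_smul {n : ℕ} (c : ℝ) (v : Fin n → ℝ) : vecNorm (c • v) = |c| * vecNorm v := by
  rw [vecNorm_eq, toE_smul, norm_smul, Real.norm_eq_abs, vecNorm_eq]
lemma vecNorm_add_le {n : ℕ} (x y : Fin n → ℝ) : vecNorm (x + y) ≤ vecNorm x + vecNorm y := by
  rw [vecNorm_eq, vecNorm_eq, vecNorm_eq, toE_add]; exact norm_add_le _ _
lemma vecNorm_zero {n : ℕ} : vecNorm (0 : Fin n → ℝ) = 0 := by simp [vecNorm]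
lemma vecNorm_pos {n : ℕ} {v : Fin n → ℝ} (hv : v ≠ 0) : 0 < vecNorm v := by
  rw [vecNorm_eq]; exact norm_pos_iff.mpr (fun h => hv (by have h' := congrArg (WithLp.equiv 2 (Fin n → ℝ)) h; simpa [toE] using h'))

lemma frobNorm_nonneg {N d : ℕ} (X : Matrix (Fin N) (Fin d) ℝ) : 0 ≤ frobNorm X := Real.sqrt_nonneg _
lemma frobNorm_sq {N d : ℕ} (X : Matrix (Fin N) (Fin d) ℝ) : frobNorm X ^ 2 = ∑ i, ∑ j, X i j ^ 2 :=
  Real.sq_sqrt (Finset.sum_nonneg fun i _ => Finset.sum_nonneg fun j _ => sq_nonneg _)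

lemma le_of_sq_le_sq' {a b : ℝ} (hb : 0 ≤ b) (h : a ^ 2 ≤ b ^ 2) (ha : 0 ≤ a) : a ≤ b := by
  have h2 := Real.sqrt_le_sqrt h
  rwa [Real.sqrt_sq ha, Real.sqrt_sq hb] at h2

/-- crude bound -/
lemma mulVec_le_frob {N d : ℕ} (M : Matrix (Fin N) (Fin d) ℝ) (v : Fin d → ℝ) :
    vecNorm (M.mulVec v) ≤ frobNorm M * vecNorm v := by
  have h1 : vecNorm (M.mulVec v) ^ 2 ≤ (frobNorm M * vecNorm v) ^ 2 := by
    rw [vecNorm_sq, mul_pow, vecNorm_sq]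
    rw [frobNorm_sq, Finset.sum_mul]
    refine Finset.sum_le_sum fun i _ => ?_
    exact Finset.sum_mul_sq_le_sq_mul_sq Finset.univ (fun j => M i j) v
  exact le_of_sq_le_sq' (mul_nonneg (frobNorm_nonneg _) (vecNorm_nonneg _)) h1 (vecNorm_nonneg _)

lemma specSet_bdd {N d : ℕ} (M : Matrix (Fin N) (Fin d) ℝ) :
    BddAbove {c : ℝ | ∃ v : Fin d → ℝ, vecNorm v ≤ 1 ∧ c = vecNorm (M.mulVec v)} := by
  refine ⟨frobNorm M, fun c hc => ?_⟩
  obtain ⟨v, hv, rfl⟩ := hc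
  calc vecNorm (M.mulVec v) ≤ frobNorm M * vecNorm v := mulVec_le_frob M v
    _ ≤ frobNorm M * 1 := by
        exact mul_le_mul_of_nonneg_left hv (frobNorm_nonneg M)
    _ = frobNorm M := mul_one _

lemma specSet_mem {N d : ℕ} (M : Matrix (Fin N) (Fin d) ℝ) {v : Fin d → ℝ} (hv : vecNorm v ≤ 1) :
    vecNorm (M.mulVec v) ∈ {c : ℝ | ∃ v : Fin d → ℝ, vecNorm v ≤ 1 ∧ c = vecNorm (M.mulVec v)} :=
  ⟨v, hv, rfl⟩

lemma specNorm_nonneg {N d : ℕ} (M : Matrix (Fin N) (Fin d) ℝ) : 0 ≤ specNorm M := by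
  have h0 : (0 : ℝ) ∈ {c : ℝ | ∃ v : Fin d → ℝ, vecNorm v ≤ 1 ∧ c = vecNorm (M.mulVec v)} :=
    ⟨0, by rw [vecNorm_zero]; norm_num, by rw [Matrix.mulVec_zero, vecNorm_zero]⟩
  exact le_csSup (specSet_bdd M) h0

lemma mulVec_le_spec_one {N d : ℕ} (M : Matrix (Fin N) (Fin d) ℝ) {v : Fin d → ℝ}
    (hv : vecNorm v ≤ 1) : vecNorm (M.mulVec v) ≤ specNorm M :=
  le_csSup (specSet_bdd M) (specSet_mem M hv)

lemma mulVec_le_spec {N d : ℕ} (M : Matrix (Fin N) (Fin d) ℝ) (v : Fin d → ℝ) :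
    vecNorm (M.mulVec v) ≤ specNorm M * vecNorm v := by
  rcases eq_or_ne v 0 with rfl | hv
  · rw [Matrix.mulVec_zero, vecNorm_zero, vecNorm_zero, mul_zero]
  · have hp : 0 < vecNorm v := vecNorm_pos hv
    have h1 : vecNorm ((vecNorm v)⁻¹ • v) ≤ 1 := by
      rw [vecNorm_smul, abs_of_nonneg (inv_nonneg.mpr hp.le), inv_mul_cancel₀ hp.ne']
    have h2 := mulVec_le_spec_one M h1
    rw [Matrix.mulVec_smul, vecNorm_smul, abs_of_nonneg (inv_nonneg.mpr hp.le)] at h2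
    calc vecNorm (M.mulVec v) = vecNorm v * ((vecNorm v)⁻¹ * vecNorm (M.mulVec v)) := by
          field_simp
      _ ≤ vecNorm v * specNorm M := mul_le_mul_of_nonneg_left h2 hp.le
      _ = specNorm M * vecNorm v := mul_comm _ _

lemma transpose_mulVec_le_spec {d : ℕ} (M : Matrix (Fin d) (Fin d) ℝ) (v : Fin d → ℝ) :
    vecNorm (M.transpose.mulVec v) ≤ specNorm M * vecNorm v := by
  set y := M.transpose.mulVec v with hy
  rcases eq_or_ne (vecNorm y) 0 with h0 | h0
  · rw [h0]; exact mul_nonneg (specNorm_nonneg M) (vecNorm_nonneg v)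
  · have hyp : 0 < vecNorm y := lt_of_le_of_ne (vecNorm_nonneg y) (Ne.symm h0)
    have key : vecNorm y ^ 2 ≤ vecNorm v * (specNorm M * vecNorm y) := by
      have hid : ∑ i, y i ^ 2 = ∑ i, v i * (M.mulVec y) i := by
        simp only [hy, Matrix.mulVec_transpose]
        have := Matrix.dotProduct_mulVec v M (Matrix.vecMul v M)
        simp only [dotProduct] at this ⊢
        simp_rw [sq]
        rw [← this]
      have hcs : ∑ i, v i * (M.mulVec y) i ≤ vecNorm v * vecNorm (M.mulVec y) := by
        have h := Finset.sum_mul_sq_le_sq_mul_sq Finset.univ v (M.mulVec y)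
        have := Real.sqrt_le_sqrt h
        rw [Real.sqrt_mul (Finset.sum_nonneg fun i _ => sq_nonneg _)] at this
        calc ∑ i, v i * (M.mulVec y) i ≤ |∑ i, v i * (M.mulVec y) i| := le_abs_self _
          _ = Real.sqrt ((∑ i, v i * (M.mulVec y) i) ^ 2) := (Real.sqrt_sq_eq_abs _).symm
          _ ≤ vecNorm v * vecNorm (M.mulVec y) := this
      calc vecNorm y ^ 2 = ∑ i, v i * (M.mulVec y) i := by rw [vecNorm_sq, hid]
        _ ≤ vecNorm v * vecNorm (M.mulVec y) := hcs
        _ ≤ vecNorm v * (specNorm M * vecNorm y) :=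
            mul_le_mul_of_nonneg_left (mulVec_le_spec M y) (vecNorm_nonneg v)
    have : vecNorm y * vecNorm y ≤ (specNorm M * vecNorm v) * vecNorm y := by
      calc vecNorm y * vecNorm y = vecNorm y ^ 2 := (sq _).symm
        _ ≤ vecNorm v * (specNorm M * vecNorm y) := key
        _ = (specNorm M * vecNorm v) * vecNorm y := by ring
    exact le_of_mul_le_mul_right this hyp

lemma frobNorm_sq_cols {N d : ℕ} (X : Matrix (Fin N) (Fin d) ℝ) :
    frobNorm X ^ 2 = ∑ j, vecNorm (fun i => X i j) ^ 2 := by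
  rw [frobNorm_sq, Finset.sum_comm]
  exact Finset.sum_congr rfl fun j _ => (vecNorm_sq _).symm

lemma frobNorm_sq_rows {N d : ℕ} (X : Matrix (Fin N) (Fin d) ℝ) :
    frobNorm X ^ 2 = ∑ i, vecNorm (fun j => X i j) ^ 2 := by
  rw [frobNorm_sq]
  exact Finset.sum_congr rfl fun i _ => (vecNorm_sq _).symm

lemma frob_le_of_sq_le_sq {N d N' d' : ℕ} {X : Matrix (Fin N) (Fin d) ℝ} {c : ℝ}
    (hc : 0 ≤ c) (h : frobNorm X ^ 2 ≤ c ^ 2) : frobNorm X ≤ c :=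
  le_of_sq_le_sq' hc h (frobNorm_nonneg X)

lemma frob_mul_left {N d : ℕ} (M : Matrix (Fin N) (Fin N) ℝ) (Y : Matrix (Fin N) (Fin d) ℝ) :
    frobNorm (M * Y) ≤ specNorm M * frobNorm Y := by
  refine frob_le_of_sq_le_sq (N' := 0) (d' := 0)
    (mul_nonneg (specNorm_nonneg M) (frobNorm_nonneg Y)) ?_
  rw [frobNorm_sq_cols, mul_pow, frobNorm_sq_cols, Finset.mul_sum]
  refine Finset.sum_le_sum fun j _ => ?_
  have hcol : (fun i => (M * Y) i j) = M.mulVec (fun k => Y k j) := by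
    funext i; simp [Matrix.mul_apply, Matrix.mulVec, dotProduct]
  rw [hcol]
  have h := mulVec_le_spec M (fun k => Y k j)
  calc vecNorm (M.mulVec fun k => Y k j) ^ 2 ≤ (specNorm M * vecNorm fun k => Y k j) ^ 2 := by
        apply pow_le_pow_left₀ (vecNorm_nonneg _) h
    _ = specNorm M ^ 2 * vecNorm (fun k => Y k j) ^ 2 := mul_pow _ _ _

lemma frob_mul_right {N d : ℕ} (Y : Matrix (Fin N) (Fin d) ℝ) (Wm : Matrix (Fin d) (Fin d) ℝ) :
    frobNorm (Y * Wm) ≤ frobNorm Y * specNorm Wm := by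
  refine frob_le_of_sq_le_sq (N' := 0) (d' := 0)
    (mul_nonneg (frobNorm_nonneg Y) (specNorm_nonneg Wm)) ?_
  rw [frobNorm_sq_rows, mul_pow, frobNorm_sq_rows, Finset.sum_mul]
  refine Finset.sum_le_sum fun i _ => ?_
  have hrow : (fun j => (Y * Wm) i j) = Wm.transpose.mulVec (fun k => Y i k) := by
    funext j
    simp [Matrix.mul_apply, Matrix.mulVec, dotProduct, Matrix.transpose_apply, mul_comm]
  rw [hrow]
  have h := transpose_mulVec_le_spec Wm (fun k => Y i k)
  calc vecNorm (Wm.transpose.mulVec fun k => Y i k) ^ 2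
      ≤ (specNorm Wm * vecNorm fun k => Y i k) ^ 2 := pow_le_pow_left₀ (vecNorm_nonneg _) h 2
    _ = vecNorm (fun k => Y i k) ^ 2 * specNorm Wm ^ 2 := by ring

section proj
variable {N : ℕ} {u : Fin N → ℝ}

lemma Q_mulVec (u : Fin N → ℝ) (w : Fin N → ℝ) :
    ((1 - Matrix.vecMulVec u u).mulVec w) = w - (∑ j, u j * w j) • u := by
  funext i
  have h1 : (1 - Matrix.vecMulVec u u).mulVec w i
      = w i - (Matrix.vecMulVec u u).mulVec w i := by
    rw [Matrix.sub_mulVec]; simp [Matrix.one_mulVec]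
  rw [h1]
  have h2 : (Matrix.vecMulVec u u).mulVec w i = (∑ j, u j * w j) * u i := by
    simp only [Matrix.mulVec, dotProduct, Matrix.vecMulVec_apply, Finset.sum_mul]
    exact Finset.sum_congr rfl fun x _ => by ring
  rw [h2]; simp [mul_comm]

lemma sum_u_sq (hu : vecNorm u = 1) : ∑ i, u i ^ 2 = 1 := by
  have := vecNorm_sq u; rw [hu] at this; simpa using this.symm

lemma Q_contract (hu : vecNorm u = 1) (w : Fin N → ℝ) :
    vecNorm ((1 - Matrix.vecMulVec u u).mulVec w) ≤ vecNorm w := by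
  set t := ∑ j, u j * w j with ht
  refine le_of_sq_le_sq' (vecNorm_nonneg w) ?_ (vecNorm_nonneg _)
  rw [Q_mulVec, vecNorm_sq, vecNorm_sq]
  have expand : ∀ i, (w i - t * u i) ^ 2 = w i ^ 2 - 2 * t * (u i * w i) + t ^ 2 * u i ^ 2 :=
    fun i => by ring
  calc ∑ i, (w - t • u) i ^ 2 = ∑ i, (w i ^ 2 - 2 * t * (u i * w i) + t ^ 2 * u i ^ 2) := by
        refine Finset.sum_congr rfl fun i _ => ?_
        simp only [Pi.sub_apply, Pi.smul_apply, smul_eq_mul]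
        exact expand i
    _ = ∑ i, w i ^ 2 - 2 * t * (∑ i, u i * w i) + t ^ 2 * (∑ i, u i ^ 2) := by
        rw [Finset.sum_add_distrib, Finset.sum_sub_distrib, ← Finset.mul_sum, ← Finset.mul_sum]
    _ = ∑ i, w i ^ 2 - t ^ 2 := by rw [← ht, sum_u_sq hu]; ring
    _ ≤ ∑ i, w i ^ 2 := by nlinarith [sq_nonneg t]

lemma Q_smul_u (hu : vecNorm u = 1) (μ : ℝ) :
    (1 - Matrix.vecMulVec u u).mulVec (μ • u) = 0 := by
  rw [Q_mulVec]
  have : ∑ j, u j * (μ • u) j = μ := by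
    simp only [Pi.smul_apply, smul_eq_mul]
    calc ∑ j, u j * (μ * u j) = μ * ∑ j, u j ^ 2 := by
          rw [Finset.mul_sum]; exact Finset.sum_congr rfl fun j _ => by ring
      _ = μ := by rw [sum_u_sq hu, mul_one]
  rw [this]; ext i; simp

end proj

section sigma
variable {N : ℕ} (σ : (Fin N → ℝ) → (Fin N → ℝ)) (u : Fin N → ℝ)

lemma Q_sigma_tu (hlip : ∀ x y : Fin N → ℝ, vecNorm (σ x - σ y) ≤ vecNorm (x - y))
    (hu : vecNorm u = 1) (hσu : ∀ t : ℝ, t ≠ 0 → ∃ μ : ℝ, σ (t • u) = μ • u) (t : ℝ) :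
    vecNorm ((1 - Matrix.vecMulVec u u).mulVec (σ (t • u))) = 0 := by
  rcases eq_or_ne t 0 with rfl | ht
  · refine le_antisymm ?_ (vecNorm_nonneg _)
    refine le_of_forall_pos_le_add ?_
    intro ε hε
    rw [zero_add]
    obtain ⟨μ, hμ⟩ := hσu ε hε.ne'
    have hdec : σ ((0 : ℝ) • u) = (σ ((0:ℝ) • u) - σ (ε • u)) + σ (ε • u) := by ring_nf
    calc vecNorm ((1 - Matrix.vecMulVec u u).mulVec (σ ((0:ℝ) • u)))
        = vecNorm ((1 - Matrix.vecMulVec u u).mulVec ((σ ((0:ℝ) • u) - σ (ε • u)) + σ (ε • u))) := by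
          rw [← hdec]
      _ ≤ vecNorm ((1 - Matrix.vecMulVec u u).mulVec (σ ((0:ℝ) • u) - σ (ε • u)))
          + vecNorm ((1 - Matrix.vecMulVec u u).mulVec (σ (ε • u))) := by
          rw [Matrix.mulVec_add]; exact vecNorm_add_le _ _
      _ ≤ vecNorm (σ ((0:ℝ) • u) - σ (ε • u)) + 0 := by
          refine add_le_add (Q_contract hu _) ?_
          rw [hμ, Q_smul_u hu, vecNorm_zero]
      _ ≤ vecNorm ((0:ℝ) • u - ε • u) + 0 := by
          exact add_le_add (hlip _ _) le_rfl
      _ = ε := by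
          rw [add_zero, zero_smul, zero_sub, ← neg_smul, vecNorm_smul, hu,
            abs_neg, abs_of_pos hε, mul_one]
  · obtain ⟨μ, hμ⟩ := hσu t ht
    rw [hμ, Q_smul_u hu, vecNorm_zero]

lemma Q_sigma_col (hlip : ∀ x y : Fin N → ℝ, vecNorm (σ x - σ y) ≤ vecNorm (x - y))
    (hu : vecNorm u = 1) (hσu : ∀ t : ℝ, t ≠ 0 → ∃ μ : ℝ, σ (t • u) = μ • u)
    (m : Fin N → ℝ) :
    vecNorm ((1 - Matrix.vecMulVec u u).mulVec (σ m))
      ≤ vecNorm ((1 - Matrix.vecMulVec u u).mulVec m) := by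
  set t := ∑ j, u j * m j with ht
  have hdec : σ m = (σ m - σ (t • u)) + σ (t • u) := by ring_nf
  calc vecNorm ((1 - Matrix.vecMulVec u u).mulVec (σ m))
      = vecNorm ((1 - Matrix.vecMulVec u u).mulVec ((σ m - σ (t • u)) + σ (t • u))) := by
        rw [← hdec]
    _ ≤ vecNorm ((1 - Matrix.vecMulVec u u).mulVec (σ m - σ (t • u)))
        + vecNorm ((1 - Matrix.vecMulVec u u).mulVec (σ (t • u))) := by
        rw [Matrix.mulVec_add]; exact vecNorm_add_le _ _
    _ = vecNorm ((1 - Matrix.vecMulVec u u).mulVec (σ m - σ (t • u))) := by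
        rw [Q_sigma_tu σ u hlip hu hσu t, add_zero]
    _ ≤ vecNorm (σ m - σ (t • u)) := Q_contract hu _
    _ ≤ vecNorm (m - t • u) := hlip _ _
    _ = vecNorm ((1 - Matrix.vecMulVec u u).mulVec m) := by rw [Q_mulVec, ht]

end sigma

lemma Q_sigma_frob {N d : ℕ} (σ : (Fin N → ℝ) → (Fin N → ℝ)) (u : Fin N → ℝ)
    (hlip : ∀ x y : Fin N → ℝ, vecNorm (σ x - σ y) ≤ vecNorm (x - y))
    (hu : vecNorm u = 1) (hσu : ∀ t : ℝ, t ≠ 0 → ∃ μ : ℝ, σ (t • u) = μ • u)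
    (M : Matrix (Fin N) (Fin d) ℝ) :
    frobNorm ((1 - Matrix.vecMulVec u u) * colApply σ M)
      ≤ frobNorm ((1 - Matrix.vecMulVec u u) * M) := by
  refine le_of_sq_le_sq' (frobNorm_nonneg _) ?_ (frobNorm_nonneg _)
  rw [frobNorm_sq_cols, frobNorm_sq_cols]
  refine Finset.sum_le_sum fun j _ => ?_
  set Q : Matrix (Fin N) (Fin N) ℝ := 1 - Matrix.vecMulVec u u with hQ
  have hc1 : (fun i => (Q * colApply σ M) i j)
      = Q.mulVec (σ (fun k => M k j)) := by
    funext i; simp [Matrix.mul_apply, Matrix.mulVec, dotProduct, colApply]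
  have hc2 : (fun i => (Q * M) i j) = Q.mulVec (fun k => M k j) := by
    funext i; simp [Matrix.mul_apply, Matrix.mulVec, dotProduct]
  rw [hc1, hc2]
  exact pow_le_pow_left₀ (vecNorm_nonneg _) (Q_sigma_col σ u hlip hu hσu _) 2

lemma QAP_zero {N : ℕ} (u : Fin N → ℝ) (hu : vecNorm u = 1) (Am : Matrix (Fin N) (Fin N) ℝ)
    (lamv : ℝ) (heig : Am.mulVec u = lamv • u) :
    (1 - Matrix.vecMulVec u u) * Am * Matrix.vecMulVec u u = 0 := by
  have hAP : Am * Matrix.vecMulVec u u = lamv • Matrix.vecMulVec u u := by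
    ext i j
    simp only [Matrix.mul_apply, Matrix.vecMulVec_apply, Matrix.smul_apply, smul_eq_mul]
    have : ∑ k, Am i k * (u k * u j) = (Am.mulVec u) i * u j := by
      simp only [Matrix.mulVec, dotProduct, Finset.sum_mul]
      exact Finset.sum_congr rfl fun k _ => by ring
    rw [this, heig]; simp; ring
  have hPP : Matrix.vecMulVec u u * Matrix.vecMulVec u u = Matrix.vecMulVec u u := by
    ext i j
    simp only [Matrix.mul_apply, Matrix.vecMulVec_apply]
    calc ∑ k, u i * u k * (u k * u j) = (u i * u j) * ∑ k, u k ^ 2 := by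
          rw [Finset.mul_sum]; exact Finset.sum_congr rfl fun k _ => by ring
      _ = u i * u j := by rw [sum_u_sq hu, mul_one]
  rw [Matrix.mul_assoc, hAP, Matrix.mul_smul, Matrix.sub_mul, Matrix.one_mul, hPP, sub_self,
    smul_zero]

lemma Q_factor {N d : ℕ} (u : Fin N → ℝ) (hu : vecNorm u = 1) (Am : Matrix (Fin N) (Fin N) ℝ)
    (lamv : ℝ) (heig : Am.mulVec u = lamv • u) (Xm : Matrix (Fin N) (Fin d) ℝ)
    (Wm : Matrix (Fin d) (Fin d) ℝ) :
    (1 - Matrix.vecMulVec u u) * (Am * Xm * Wm)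
      = ((1 - Matrix.vecMulVec u u) * Am) * ((1 - Matrix.vecMulVec u u) * Xm) * Wm := by
  have hQX : (1 - Matrix.vecMulVec u u) * Xm = Xm - Matrix.vecMulVec u u * Xm := by
    rw [Matrix.sub_mul, Matrix.one_mul]
  have h : ((1 - Matrix.vecMulVec u u) * Am) * ((1 - Matrix.vecMulVec u u) * Xm)
      = (1 - Matrix.vecMulVec u u) * Am * Xm := by
    rw [hQX, Matrix.mul_sub, ← Matrix.mul_assoc, QAP_zero u hu Am lamv heig,
      Matrix.zero_mul, sub_zero]
  calc (1 - Matrix.vecMulVec u u) * (Am * Xm * Wm)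
      = ((1 - Matrix.vecMulVec u u) * Am * Xm) * Wm := by
        rw [← Matrix.mul_assoc, ← Matrix.mul_assoc]
    _ = _ := by rw [h]

/-- If `∏_{l<L} ‖(I-P)A^{(l)}‖₂ ‖W^{(l)}‖₂ → 0`, then `E_Proj(X^{(L)}) = ‖X^{(L)} - P X^{(L)}‖_F² → 0`. -/
theorem stmt7 {N d : ℕ} (σ : (Fin N → ℝ) → (Fin N → ℝ))
    (hlip : ∀ x y : Fin N → ℝ, vecNorm (σ x - σ y) ≤ vecNorm (x - y))
    (u : Fin N → ℝ) (hu : vecNorm u = 1)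
    (A : ℕ → Matrix (Fin N) (Fin N) ℝ) (W : ℕ → Matrix (Fin d) (Fin d) ℝ)
    (lam : ℕ → ℝ) (heig : ∀ l, (A l).mulVec u = lam l • u)
    (hσu : ∀ t : ℝ, t ≠ 0 → ∃ μ : ℝ, σ (t • u) = μ • u)
    (X : ℕ → Matrix (Fin N) (Fin d) ℝ)
    (hrec : ∀ l, X (l + 1) = colApply σ (A l * X l * W l))
    (hprod : Filter.Tendsto
      (fun L => ∏ l ∈ Finset.range L,
        specNorm ((1 - Matrix.vecMulVec u u) * A l) * specNorm (W l))
      Filter.atTop (nhds 0)) :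
    Filter.Tendsto (fun L => frobNorm (X L - Matrix.vecMulVec u u * X L) ^ 2)
      Filter.atTop (nhds 0) := by
  set Q : Matrix (Fin N) (Fin N) ℝ := 1 - Matrix.vecMulVec u u with hQdef
  set s : ℕ → ℝ := fun l => specNorm (Q * A l) * specNorm (W l) with hs
  have hs_nonneg : ∀ l, 0 ≤ s l := fun l => mul_nonneg (specNorm_nonneg _) (specNorm_nonneg _)
  have step : ∀ l, frobNorm (Q * X (l + 1)) ≤ s l * frobNorm (Q * X l) := by
    intro l
    rw [hrec l]
    calc frobNorm (Q * colApply σ (A l * X l * W l))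
        ≤ frobNorm (Q * (A l * X l * W l)) := Q_sigma_frob σ u hlip hu hσu _
      _ = frobNorm ((Q * A l) * (Q * X l) * (W l)) := by
          rw [hQdef, Q_factor u hu (A l) (lam l) (heig l)]
      _ ≤ specNorm (Q * A l) * frobNorm ((Q * X l) * W l) := by
          rw [Matrix.mul_assoc]; exact frob_mul_left _ _
      _ ≤ specNorm (Q * A l) * (frobNorm (Q * X l) * specNorm (W l)) :=
          mul_le_mul_of_nonneg_left (frob_mul_right _ _) (specNorm_nonneg _)
      _ = s l * frobNorm (Q * X l) := by rw [hs]; ring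
  have bound : ∀ L, frobNorm (Q * X L) ≤ (∏ l ∈ Finset.range L, s l) * frobNorm (Q * X 0) := by
    intro L
    induction L with
    | zero => simp
    | succ L ih =>
      rw [Finset.prod_range_succ]
      calc frobNorm (Q * X (L + 1)) ≤ s L * frobNorm (Q * X L) := step L
        _ ≤ s L * ((∏ l ∈ Finset.range L, s l) * frobNorm (Q * X 0)) :=
            mul_le_mul_of_nonneg_left ih (hs_nonneg L)
        _ = (∏ l ∈ Finset.range L, s l) * s L * frobNorm (Q * X 0) := by ring
  have htend : Filter.Tendsto
      (fun L => ((∏ l ∈ Finset.range L, s l) * frobNorm (Q * X 0)) ^ 2)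
      Filter.atTop (nhds 0) := by
    have h1 := (hprod.mul_const (frobNorm (Q * X 0))).pow 2
    simpa using h1
  refine squeeze_zero (fun L => sq_nonneg _) (fun L => ?_) htend
  have goal_eq : X L - Matrix.vecMulVec u u * X L = Q * X L := by
    rw [hQdef, Matrix.sub_mul, Matrix.one_mul]
  rw [goal_eq]
  exact pow_le_pow_left₀ (frobNorm_nonneg _) (bound L) 2
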